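/- For fixed a > 0 there exists a constant C such that for all n ≥ 1, Σ_{i=1}^n (a/((a+1)i−1)) · Π_{j=i+1}^{n} ((1+a)j−2−a)/((1+a)j−1) ≤ C. (This is the bound E P_n(2,0) = O(1) for the expected number of isolated loop vertices of degree 2 in the Buckley–Osthus graph.) -/
import Mathlib


open Real Finset

theorem expected_loop_degree_two_bounded (a : ℝ) (ha : 0 < a) :
    ∃ C : ℝ, ∀ n : ℕ, 1 ≤ n →
      ∑ i ∈ Finset.Icc 1 n, a / ((a + 1) * (i : ℝ) - 1) *
        ∏ j ∈ Finset.Icc (i + 1) n, ((1 + a) * (j : ℝ) - 2 - a) / ((1 + a) * (j : ℝ) - 1)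
      ≤ C := by
  refine ⟨1, fun n hn => ?_⟩
  have ha1 : (0 : ℝ) < 1 + a := by linarith
  set g : ℕ → ℝ := fun j => ((1 + a) * (j : ℝ) - 2 - a) / ((1 + a) * (j : ℝ) - 1) with hg
  set Q : ℕ → ℝ := fun i => ∏ j ∈ Finset.Icc (i + 1) n, g j with hQ
  -- per-step factorization
  have hQstep : ∀ k : ℕ, k + 1 ≤ n → Q k = g (k + 1) * Q (k + 1) := by
    intro k hk
    simp only [hQ]
    rw [show Finset.Icc (k + 1) n = Finset.Ico (k + 1) (n + 1) by
          rw [Finset.Ico_add_one_right_eq_Icc],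
        Finset.prod_eq_prod_Ico_succ_bot (by omega : k + 1 < n + 1),
        Finset.Ico_add_one_right_eq_Icc]
  -- generic algebraic identity
  have key : ∀ D q : ℝ, D ≠ 0 →
      a / D * q = a / (1 + a) * (q - (D - (1 + a)) / D * q) := by
    intro D q hD
    field_simp
    ring
  -- telescoping identity for each term
  have hterm : ∀ k : ℕ, k < n →
      a / ((a + 1) * ((k + 1 : ℕ) : ℝ) - 1) * Q (k + 1)
        = (a / (1 + a)) * (Q (k + 1) - Q k) := by
    intro k hk
    rw [hQstep k (by omega)]
    have hk1 : (1 : ℝ) ≤ ((k + 1 : ℕ) : ℝ) := by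
      exact_mod_cast Nat.one_le_iff_ne_zero.mpr (by omega)
    have hd : (0 : ℝ) < (1 + a) * ((k + 1 : ℕ) : ℝ) - 1 := by nlinarith
    have hg1 : g (k + 1) = ((1 + a) * ((k + 1 : ℕ) : ℝ) - 2 - a) / ((1 + a) * ((k + 1 : ℕ) : ℝ) - 1) := rfl
    rw [hg1,
        show (a + 1) * ((k + 1 : ℕ) : ℝ) - 1 = (1 + a) * ((k + 1 : ℕ) : ℝ) - 1 by ring,
        show (1 + a) * ((k + 1 : ℕ) : ℝ) - 2 - a
            = ((1 + a) * ((k + 1 : ℕ) : ℝ) - 1) - (1 + a) by ring]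
    exact key _ _ hd.ne'
  -- sum telescopes
  have hsum : ∑ i ∈ Finset.Icc 1 n, a / ((a + 1) * (i : ℝ) - 1) * Q i
      = (a / (1 + a)) * (Q n - Q 0) := by
    rw [← Finset.Ico_add_one_right_eq_Icc, Finset.sum_Ico_eq_sum_range]
    have hnn : n + 1 - 1 = n := rfl
    rw [hnn]
    have : ∀ k ∈ Finset.range n,
        a / ((a + 1) * ((1 + k : ℕ) : ℝ) - 1) * Q (1 + k)
          = (a / (1 + a)) * (Q (k + 1) - Q k) := by
      intro k hk
      rw [Finset.mem_range] at hk
      rw [show 1 + k = k + 1 by ring]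
      exact hterm k hk
    rw [Finset.sum_congr rfl this, ← Finset.mul_sum, Finset.sum_range_sub]
  rw [hsum]
  -- Q n = 1
  have hQn : Q n = 1 := by simp [hQ]
  -- bounds on Q 1
  have hQ1nonneg : 0 ≤ Q 1 := by
    apply Finset.prod_nonneg
    intro j hj
    rw [Finset.mem_Icc] at hj
    have h2 : (2 : ℝ) ≤ (j : ℝ) := by exact_mod_cast hj.1
    apply div_nonneg <;> nlinarith
  have hQ1le : Q 1 ≤ 1 := by
    apply Finset.prod_le_one
    · intro j hj
      rw [Finset.mem_Icc] at hj
      have h2 : (2 : ℝ) ≤ (j : ℝ) := by exact_mod_cast hj.1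
      apply div_nonneg <;> nlinarith
    · intro j hj
      rw [Finset.mem_Icc] at hj
      have h2 : (2 : ℝ) ≤ (j : ℝ) := by exact_mod_cast hj.1
      apply div_le_one_of_le₀ <;> nlinarith
  -- Q 0 = (-1/a) * Q 1
  have hg1 : g 1 = -1 / a := by
    simp only [hg, Nat.cast_one]
    rw [show (1 + a) * (1 : ℝ) - 2 - a = -1 by ring,
        show (1 + a) * (1 : ℝ) - 1 = a by ring]
  have hQ0 : Q 0 = -1 / a * Q 1 := by
    rw [hQstep 0 hn, hg1]
  rw [hQn, hQ0]
  have e : a / (1 + a) * (1 - -1 / a * Q 1) = (a + Q 1) / (1 + a) := by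
    field_simp
    ring
  rw [e, div_le_one ha1]
  linarith
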